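/- If f : ℝⁿ → ℝ is differentiable, γ : [0,T] → ℝⁿ is differentiable with γ'(t) = e(γ(t)), the Lie derivative of f along e vanishes at all points satisfying P, γ(t) satisfies P for all t ∈ [0,T], and f(γ(0)) ≠ 0, then f(γ(t)) ≠ 0 for all t ∈ [0,T]. -/

import Mathlib

open InnerProductSpace

/-- Soundness of the differential invariant rule (dI≠) for disequalities. -/
theorem dI_ne {n : ℕ} (e : EuclideanSpace ℝ (Fin n) → EuclideanSpace ℝ (Fin n))
    (f : EuclideanSpace ℝ (Fin n) → ℝ) (P : EuclideanSpace ℝ (Fin n) → Prop)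
    (γ : ℝ → EuclideanSpace ℝ (Fin n)) (T : ℝ) (hT : 0 ≤ T)
    (hf : Differentiable ℝ f)
    (hγ : ∀ t ∈ Set.Icc (0:ℝ) T, HasDerivAt γ (e (γ t)) t)
    (hlie : ∀ x, P x → ⟪gradient f x, e x⟫_ℝ = 0)
    (hP : ∀ t ∈ Set.Icc (0:ℝ) T, P (γ t))
    (h0 : f (γ 0) ≠ 0) :
    ∀ t ∈ Set.Icc (0:ℝ) T, f (γ t) ≠ 0 := by
  have key : ∀ t ∈ Set.Icc (0:ℝ) T, HasDerivAt (fun t => f (γ t)) 0 t := by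
    intro t ht
    have hγt := hγ t ht
    have hgrad := (hf (γ t)).hasGradientAt
    have := (hgrad.hasFDerivAt.comp t hγt.hasFDerivAt).hasDerivAt
    simp only [ContinuousLinearMap.coe_comp', Function.comp_apply,
      ContinuousLinearMap.smulRight_apply, ContinuousLinearMap.one_apply, ContinuousLinearMap.toSpanSingleton_apply, one_smul] at this
    have hval : (InnerProductSpace.toDual ℝ (EuclideanSpace ℝ (Fin n)) (gradient f (γ t)))
        (e (γ t)) = 0 := by
      rw [InnerProductSpace.toDual_apply_apply]
      exact hlie (γ t) (hP t ht)
    rwa [hval] at this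
  have hconst : ∀ t ∈ Set.Icc (0:ℝ) T, f (γ t) = f (γ 0) := by
    apply constant_of_has_deriv_right_zero
    · intro t ht
      exact (key t ht).continuousAt.continuousWithinAt
    · intro t ht
      exact ((key t (Set.Ico_subset_Icc_self ht)).hasDerivWithinAt)
  intro t ht
  rw [hconst t ht]
  exact h0
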